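/- Let n ≥ 1, let A be a real n×n matrix possessing the strong Perron–Frobenius property, and let q be a polynomial with real coefficients of degree m ≥ 1 all of whose coefficients q₀, q₁, …, q_m are strictly positive. Then the matrix q(A), obtained by evaluating the polynomial q at A, possesses the strong Perron–Frobenius property. -/

import Mathlib

open Polynomial Matrix

/-- The spectral radius of a real matrix: the maximum of the moduli of the complex
roots of its characteristic polynomial. -/
noncomputable def specRadius {n : ℕ} (A : Matrix (Fin n) (Fin n) ℝ) : ℝ :=
  (((A.charpoly.map (algebraMap ℝ ℂ)).roots.map (fun z => ‖z‖₊)).sup : NNReal)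

/-- The strong Perron–Frobenius property for a real matrix. -/
def HasStrongPF {n : ℕ} (A : Matrix (Fin n) (Fin n) ℝ) : Prop :=
  0 < specRadius A ∧
  (A.charpoly.map (algebraMap ℝ ℂ)).rootMultiplicity (specRadius A : ℂ) = 1 ∧
  (∃ x : Fin n → ℝ, (∀ i, 0 < x i) ∧ A.mulVec x = (specRadius A) • x) ∧
  (∀ μ ∈ (A.charpoly.map (algebraMap ℝ ℂ)).roots,
      μ ≠ (specRadius A : ℂ) → ‖μ‖ < specRadius A)

/-- Eventual positivity of a real matrix. -/
def EventuallyPos {n : ℕ} (A : Matrix (Fin n) (Fin n) ℝ) : Prop :=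
  ∃ p : ℕ, ∀ k ≥ p, ∀ i j, 0 < (A ^ k) i j


lemma charpoly_eval' {n : ℕ} {R : Type*} [CommRing R] (M : Matrix (Fin n) (Fin n) R) (r : R) :
    M.charpoly.eval r = (Matrix.scalar (Fin n) r - M).det := by
  rw [Matrix.charpoly, _root_.eval_det, matPolyEquiv_charmatrix]
  simp

lemma charpoly_aeval_eq {n : ℕ} (B : Matrix (Fin n) (Fin n) ℂ) (p : ℂ[X]) (hp : 1 ≤ p.natDegree) :
    (aeval B p).charpoly = (B.charpoly.roots.map (fun z => X - C (p.eval z))).prod := by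
  classical
  set R := B.charpoly.roots with hR
  have hmonic : B.charpoly.Monic := B.charpoly_monic
  have hsplits : B.charpoly.Splits := IsAlgClosed.splits _
  have hcard : Multiset.card R = n := by
    rw [hR, splits_iff_card_roots.mp hsplits, Matrix.charpoly_natDegree_eq_dim, Fintype.card_fin]
  have hfact : B.charpoly = (R.map (fun a => X - C a)).prod := by
    have h := Splits.eq_prod_roots hsplits
    rwa [hmonic.leadingCoeff, C_1, one_mul] at h
  apply Polynomial.funext
  intro y
  set r : ℂ[X] := C y - p with hr
  have hp0 : p ≠ 0 := fun h => by simp [h] at hp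
  have hrne : r ≠ 0 := by
    intro h
    have : r.coeff p.natDegree = 0 := by rw [h]; simp
    rw [hr, coeff_sub, coeff_C, if_neg (by omega)] at this
    simp only [zero_sub, neg_eq_zero] at this
    exact (Polynomial.leadingCoeff_ne_zero.mpr hp0) this
  set lc : ℂ := r.leadingCoeff with hlc
  have hrsplit : r = C lc * (r.roots.map fun a => X - C a).prod :=
    Splits.eq_prod_roots (IsAlgClosed.splits _)
  have hrev : ∀ z : ℂ, r.eval z = lc * ((r.roots.map (fun a => z - a)).prod) := by
    intro z
    conv_lhs => rw [hrsplit]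
    rw [eval_mul, eval_C, eval_multiset_prod, Multiset.map_map]
    simp
  -- LHS
  have haevalr : aeval B r = Matrix.scalar (Fin n) y - aeval B p := by
    rw [hr, map_sub, aeval_C, Matrix.algebraMap_eq_diagonal, Matrix.scalar_apply]
    simp
  have hL : ((aeval B p).charpoly).eval y = (aeval B r).det := by
    rw [charpoly_eval', haevalr]
  -- determinant of evaluated polynomial as product over roots of r
  have hdetlin : ∀ a : ℂ, (B - algebraMap ℂ _ a).det = ((R.map (fun z => z - a)).prod) := by
    intro a
    have h1 : B - algebraMap ℂ _ a = -(Matrix.scalar (Fin n) a - B) := by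
      rw [Matrix.algebraMap_eq_diagonal, Matrix.scalar_apply, neg_sub]
      congr 1
    have h2 : B.charpoly.eval a = (R.map (fun z => a - z)).prod := by
      conv_lhs => rw [hfact]
      rw [eval_multiset_prod, Multiset.map_map]
      simp
    have h3 : (R.map (fun z => a - z)) = (R.map (fun z => z - a)).map Neg.neg := by
      rw [Multiset.map_map]; simp
    rw [h1, Matrix.det_neg, ← charpoly_eval', h2, h3, Multiset.prod_map_neg, Multiset.card_map,
      hcard, Fintype.card_fin, ← mul_assoc, ← mul_pow]
    simp
  obtain ⟨l, hl⟩ : ∃ l : List ℂ, r.roots = ↑l := ⟨r.roots.toList, (Multiset.coe_toList _).symm⟩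
  have hLdet : (aeval B r).det
      = lc ^ n * ((r.roots.map (fun a => (R.map (fun z => z - a)).prod)).prod) := by
    conv_lhs => rw [hrsplit]
    rw [_root_.map_mul, aeval_C, Matrix.det_mul, Matrix.algebraMap_eq_diagonal, Matrix.det_diagonal]
    congr 1
    · simp [Finset.prod_const]
    · rw [hl, Multiset.map_coe, Multiset.prod_coe, map_list_prod (aeval B), List.map_map,
        ← Matrix.coe_detMonoidHom, map_list_prod (Matrix.detMonoidHom : Matrix (Fin n) (Fin n) ℂ →* ℂ), List.map_map,
        Multiset.map_coe, Multiset.prod_coe]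
      congr 1
      apply List.map_congr_left
      intro a _
      simp only [Function.comp_apply, map_sub, aeval_X, aeval_C, Matrix.coe_detMonoidHom]
      exact hdetlin a
  -- RHS
  have hRHS : ((R.map (fun z => X - C (p.eval z))).prod).eval y
      = lc ^ n * ((r.roots.map (fun a => (R.map (fun z => z - a)).prod)).prod) := by
    rw [eval_multiset_prod, Multiset.map_map]
    have : ∀ z ∈ R, (eval y ∘ fun z => (X : ℂ[X]) - C (p.eval z)) z
        = lc * ((r.roots.map (fun a => z - a)).prod) := by
      intro z _
      simp only [Function.comp_apply, eval_sub, eval_X, eval_C]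
      have : y - p.eval z = r.eval z := by rw [hr]; simp
      rw [this, hrev]
    rw [Multiset.map_congr rfl this]
    have hsplit : (R.map (fun z => lc * ((r.roots.map (fun a => z - a)).prod))).prod
        = (R.map (fun _ => lc)).prod * (R.map (fun z => ((r.roots.map (fun a => z - a)).prod))).prod := by
      rw [← Multiset.prod_map_mul]
    rw [hsplit, Multiset.map_const', Multiset.prod_replicate, hcard]
    congr 1
    exact Multiset.prod_map_prod_map R r.roots
  rw [hL, hLdet, ← hRHS]

lemma abs_affine_lt {a b ρ : ℝ} (ha : 0 < a) (hb : 0 < b) (hρ : 0 < ρ) {z : ℂ}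
    (hz : ‖z‖ = ρ) (hne : z ≠ (ρ : ℂ)) :
    ‖(a : ℂ) + (b : ℂ) * z‖ < a + b * ρ := by
  have hsq : z.re ^ 2 + z.im ^ 2 = ρ ^ 2 := by
    have := Complex.sq_norm z
    rw [hz, Complex.normSq_apply] at this
    nlinarith [this]
  have hre : z.re < ρ := by
    rcases lt_or_eq_of_le (Complex.re_le_norm z) with h | h
    · rwa [hz] at h
    · exfalso
      have him : z.im = 0 := by nlinarith [hsq, h, hz]
      exact hne (Complex.ext (by rw [Complex.ofReal_re, ← hz, h]) (by simp [him]))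
  have h2 : ‖(a : ℂ) + (b : ℂ) * z‖ ^ 2 < (a + b * ρ) ^ 2 := by
    rw [Complex.sq_norm, Complex.normSq_apply]
    simp only [Complex.add_re, Complex.add_im, Complex.mul_re, Complex.mul_im,
      Complex.ofReal_re, Complex.ofReal_im]
    ring_nf
    nlinarith [hsq, hre, mul_pos ha hb, sq_nonneg z.im]
  have h3 : (0:ℝ) ≤ a + b * ρ := by positivity
  exact lt_of_pow_lt_pow_left₀ 2 h3 h2

lemma eval_map_eq_sum {q : ℝ[X]} {m : ℕ} (hdeg : q.natDegree = m) (z : ℂ) :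
    (q.map (algebraMap ℝ ℂ)).eval z
      = ∑ k ∈ Finset.range (m + 1), ((q.coeff k : ℝ) : ℂ) * z ^ k := by
  have h : (q.map (algebraMap ℝ ℂ)).natDegree < m + 1 :=
    lt_of_le_of_lt Polynomial.natDegree_map_le (by omega)
  rw [Polynomial.eval_eq_sum_range' h]
  exact Finset.sum_congr rfl fun k _ => by rw [Polynomial.coeff_map]; rfl

lemma eval_abs_le {q : ℝ[X]} {m : ℕ} (hm : 1 ≤ m) (hdeg : q.natDegree = m)
    (hcoeff : ∀ k ≤ m, 0 < q.coeff k) {ρ : ℝ} (hρ : 0 < ρ) {z : ℂ}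
    (hz : ‖z‖ ≤ ρ) :
    ‖(q.map (algebraMap ℝ ℂ)).eval z‖ ≤ q.eval ρ := by
  rw [eval_map_eq_sum hdeg, Polynomial.eval_eq_sum_range' (by omega : q.natDegree < m + 1)]
  refine le_trans (norm_sum_le _ _) (Finset.sum_le_sum fun k hk => ?_)
  rw [norm_mul, norm_pow, Complex.norm_real, Real.norm_eq_abs,
    abs_of_pos (hcoeff k (by simpa using Nat.lt_succ_iff.mp (Finset.mem_range.mp hk)))]
  exact mul_le_mul_of_nonneg_left
    (pow_le_pow_left₀ (norm_nonneg z) hz k)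
    (le_of_lt (hcoeff k (Nat.lt_succ_iff.mp (Finset.mem_range.mp hk))))

lemma eval_abs_lt {q : ℝ[X]} {m : ℕ} (hm : 1 ≤ m) (hdeg : q.natDegree = m)
    (hcoeff : ∀ k ≤ m, 0 < q.coeff k) {ρ : ℝ} (hρ : 0 < ρ) {z : ℂ}
    (hz : ‖z‖ ≤ ρ) (hne : z ≠ (ρ : ℂ)) :
    ‖(q.map (algebraMap ℝ ℂ)).eval z‖ < q.eval ρ := by
  rcases lt_or_eq_of_le hz with hlt | heq
  · rw [eval_map_eq_sum hdeg, Polynomial.eval_eq_sum_range' (show q.natDegree < m + 1 by omega)]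
    refine lt_of_le_of_lt (norm_sum_le _ _)
      (Finset.sum_lt_sum (fun k hk => ?_) ⟨1, Finset.mem_range.mpr (by omega), ?_⟩)
    · rw [norm_mul, norm_pow, Complex.norm_real, Real.norm_eq_abs,
        abs_of_pos (hcoeff k (Nat.lt_succ_iff.mp (Finset.mem_range.mp hk)))]
      exact mul_le_mul_of_nonneg_left (pow_le_pow_left₀ (norm_nonneg z) hz k)
        (hcoeff k (Nat.lt_succ_iff.mp (Finset.mem_range.mp hk))).le
    · rw [norm_mul, norm_pow, Complex.norm_real, Real.norm_eq_abs, abs_of_pos (hcoeff 1 hm)]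
      simp only [pow_one]
      exact mul_lt_mul_of_pos_left hlt (hcoeff 1 hm)
  · obtain ⟨m', rfl⟩ : ∃ m', m = m' + 1 := ⟨m - 1, by omega⟩
    have key := abs_affine_lt (hcoeff 0 (by omega)) (hcoeff 1 (by omega)) hρ heq hne
    have hT : ‖∑ i ∈ Finset.range m', ((q.coeff (i + 2) : ℝ) : ℂ) * z ^ (i + 2)‖
        ≤ ∑ i ∈ Finset.range m', q.coeff (i + 2) * ρ ^ (i + 2) := by
      refine le_trans (norm_sum_le _ _) (Finset.sum_le_sum fun i hi => ?_)
      rw [norm_mul, norm_pow, Complex.norm_real, Real.norm_eq_abs, ← heq,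
        abs_of_pos (hcoeff (i + 2) (by simp at hi; omega))]
    have hq : q.eval ρ = (∑ i ∈ Finset.range m', q.coeff (i + 2) * ρ ^ (i + 2))
        + q.coeff 1 * ρ ^ 1 + q.coeff 0 * ρ ^ 0 := by
      rw [Polynomial.eval_eq_sum_range' (show q.natDegree < m' + 1 + 1 by omega),
        Finset.sum_range_succ', Finset.sum_range_succ']
    have hsum : (q.map (algebraMap ℝ ℂ)).eval z
        = (∑ i ∈ Finset.range m', ((q.coeff (i + 2) : ℝ) : ℂ) * z ^ (i + 2))
          + (((q.coeff 0 : ℝ) : ℂ) + ((q.coeff 1 : ℝ) : ℂ) * z) := by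
      rw [eval_map_eq_sum hdeg, Finset.sum_range_succ', Finset.sum_range_succ']
      ring
    rw [hsum]
    calc ‖_‖ ≤ _ + _ := norm_add_le _ _
      _ < _ := by
        rw [hq]; simp only [pow_one, pow_zero, mul_one]
        have := add_lt_add_of_le_of_lt hT key
        linarith

lemma roots_charpoly_aeval {n : ℕ} (B : Matrix (Fin n) (Fin n) ℂ) (p : ℂ[X])
    (hp : 1 ≤ p.natDegree) :
    (aeval B p).charpoly.roots = B.charpoly.roots.map (fun z => p.eval z) := by
  rw [charpoly_aeval_eq B p hp]
  have h : (B.charpoly.roots.map (fun z => X - C (p.eval z)))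
      = ((B.charpoly.roots.map (fun z => p.eval z)).map (fun a => X - C a)) := by
    rw [Multiset.map_map]; rfl
  rw [h, roots_multiset_prod_X_sub_C]

lemma sum_mulVec' {n : ℕ} {ι : Type*} (s : Finset ι) (f : ι → Matrix (Fin n) (Fin n) ℝ)
    (x : Fin n → ℝ) : (∑ i ∈ s, f i) *ᵥ x = ∑ i ∈ s, (f i) *ᵥ x := by
  classical
  induction s using Finset.induction_on with
  | empty => simp [Matrix.zero_mulVec]
  | insert _ _ h ih => rw [Finset.sum_insert h, Finset.sum_insert h, Matrix.add_mulVec, ih]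


/-- Polynomials of degree at least one with all coefficients strictly positive
preserve the strong Perron–Frobenius property. -/
theorem strongPF_posCoeff_polynomial {n : ℕ} (hn : 1 ≤ n)
    (A : Matrix (Fin n) (Fin n) ℝ) (hA : HasStrongPF A)
    (q : Polynomial ℝ) (m : ℕ) (hm : 1 ≤ m) (hdeg : q.natDegree = m)
    (hcoeff : ∀ k ≤ m, 0 < q.coeff k) :
    HasStrongPF (Polynomial.aeval A q) := by
  classical
  obtain ⟨hρpos, hmult, ⟨x, hxpos, hxeig⟩, hdom⟩ := hA
  set φ := algebraMap ℝ ℂ with hφ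
  set ρ := specRadius A with hρ
  set R := (A.charpoly.map φ).roots with hRdef
  have hcpA_ne : A.charpoly.map φ ≠ 0 := (A.charpoly_monic.map φ).ne_zero
  have hρ_mem : (ρ : ℂ) ∈ R := by
    rw [hRdef, Polynomial.mem_roots hcpA_ne]
    exact (Polynomial.rootMultiplicity_pos hcpA_ne).mp (by rw [hmult]; norm_num)
  have hcount : R.count (ρ : ℂ) = 1 := by
    rw [hRdef, Polynomial.count_roots]; exact hmult
  have hbound : ∀ μ ∈ R, ‖μ‖ ≤ ρ := by
    intro μ hμ
    by_cases h : μ = (ρ : ℂ)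
    · rw [h, Complex.norm_real, Real.norm_eq_abs, abs_of_pos hρpos]
    · exact (hdom μ hμ h).le
  set p : ℂ[X] := q.map φ with hpdef
  set B : Matrix (Fin n) (Fin n) ℂ := A.map φ with hBdef
  have hpdeg : 1 ≤ p.natDegree := by
    rw [hpdef, Polynomial.natDegree_map, hdeg]; exact hm
  have hmapQA : (aeval A q).map φ = aeval B p := by
    set Φ : Matrix (Fin n) (Fin n) ℝ →ₐ[ℝ] Matrix (Fin n) (Fin n) ℂ :=
      (Algebra.ofId ℝ ℂ).mapMatrix with hΦ
    have h1 : aeval (Φ A) q = Φ (aeval A q) := Polynomial.aeval_algHom_apply Φ A q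
    rw [hΦ] at h1
    rw [AlgHom.mapMatrix_apply, AlgHom.mapMatrix_apply] at h1
    rw [hpdef, Polynomial.aeval_map_algebraMap, hBdef]
    exact h1.symm
  have hroots : ((aeval A q).charpoly.map φ).roots = R.map (fun z => p.eval z) := by
    rw [← Matrix.charpoly_map, hmapQA, roots_charpoly_aeval B p hpdeg,
      show B.charpoly = A.charpoly.map φ from by rw [hBdef, Matrix.charpoly_map]]
  set σ : ℝ := q.eval ρ with hσdef
  have hσpos : 0 < σ := by
    rw [hσdef, Polynomial.eval_eq_sum_range' (show q.natDegree < m + 1 by omega)]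
    refine Finset.sum_pos (fun k hk => ?_) ⟨0, Finset.mem_range.mpr (by omega)⟩
    exact mul_pos (hcoeff k (Nat.lt_succ_iff.mp (Finset.mem_range.mp hk))) (pow_pos hρpos k)
  have hevalρ : p.eval (ρ : ℂ) = (σ : ℂ) := by
    rw [hpdef, show ((ρ : ℝ) : ℂ) = φ ρ from rfl, Polynomial.eval_map,
      Polynomial.eval₂_at_apply]
    rfl
  have habs_le : ∀ z ∈ R, ‖p.eval z‖ ≤ σ := fun z hz =>
    eval_abs_le hm hdeg hcoeff hρpos (hbound z hz)
  have habs_lt : ∀ z ∈ R, z ≠ (ρ : ℂ) → ‖p.eval z‖ < σ := fun z hz hne =>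
    eval_abs_lt hm hdeg hcoeff hρpos (hbound z hz) hne
  -- the spectral radius of q(A)
  have hcoe : (σ.toNNReal : ℝ) = σ := Real.coe_toNNReal σ hσpos.le
  have hsup : (((R.map (fun z => p.eval z)).map (fun z => ‖z‖₊)).sup) = σ.toNNReal := by
    apply le_antisymm
    · refine Multiset.sup_le.mpr ?_
      intro b hb
      rw [Multiset.map_map] at hb
      obtain ⟨z, hz, rfl⟩ := Multiset.mem_map.mp hb
      rw [← NNReal.coe_le_coe, hcoe, Function.comp_apply, coe_nnnorm]
      exact habs_le z hz
    · have hmem : ‖p.eval (ρ : ℂ)‖₊ ∈ (R.map (fun z => p.eval z)).map (fun z => ‖z‖₊) := by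
        rw [Multiset.map_map]
        exact Multiset.mem_map_of_mem _ hρ_mem
      have heq : ‖p.eval (ρ : ℂ)‖₊ = σ.toNNReal := by
        apply NNReal.coe_injective
        rw [coe_nnnorm, hevalρ, Complex.norm_real, Real.norm_eq_abs,
          abs_of_pos hσpos, hcoe]
      rw [← heq]
      exact Multiset.le_sup hmem
  have hspec : specRadius (aeval A q) = σ := by
    simp only [specRadius]
    rw [hroots, hsup, hcoe]
  refine ⟨by rw [hspec]; exact hσpos, ?_, ?_, ?_⟩
  · -- multiplicity one
    rw [hspec, ← Polynomial.count_roots, hroots, Multiset.count_map]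
    have hfc : R.filter (fun a => (σ : ℂ) = p.eval a) = R.filter (fun a => (ρ : ℂ) = a) := by
      apply Multiset.filter_congr
      intro a ha
      constructor
      · intro h
        by_contra hne
        have := habs_lt a ha (fun hh => hne hh.symm)
        rw [← h, Complex.norm_real, Real.norm_eq_abs, abs_of_pos hσpos] at this
        exact lt_irrefl _ this
      · intro h; rw [← h, hevalρ]
    rw [hfc, ← Multiset.count_eq_card_filter_eq, hcount]
  · -- eigenvector
    refine ⟨x, hxpos, ?_⟩
    have hpow : ∀ k : ℕ, (A ^ k) *ᵥ x = (ρ ^ k) • x := by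
      intro k
      induction k with
      | zero => simp
      | succ k ih =>
        rw [pow_succ, ← Matrix.mulVec_mulVec, hxeig, Matrix.mulVec_smul, ih, smul_smul,
          pow_succ, mul_comm]
    rw [hspec, Polynomial.aeval_eq_sum_range, sum_mulVec']
    have : ∀ k ∈ Finset.range (q.natDegree + 1),
        (q.coeff k • A ^ k) *ᵥ x = (q.coeff k * ρ ^ k) • x := by
      intro k _
      rw [Matrix.smul_mulVec, hpow, smul_smul]
    rw [Finset.sum_congr rfl this, ← Finset.sum_smul, hσdef,
      Polynomial.eval_eq_sum_range]
  · -- strict domination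
    intro μ hμ hne
    rw [hspec] at hne ⊢
    rw [hroots] at hμ
    obtain ⟨z, hz, rfl⟩ := Multiset.mem_map.mp hμ
    have hzne : z ≠ (ρ : ℂ) := fun h => hne (by rw [h, hevalρ])
    exact habs_lt z hz hzne
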